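/- arXiv:1603.04337 — 4 statements merged into one kernel-verified Lean document; each statement's English description precedes it below -/
import Mathlib

section
/- If the power graph of a group G has finite independence number, then G is locally finite (every finitely generated subgroup is finite). -/
/-- The power graph of a group: distinct `x, y` are adjacent iff one is a power of the other. -/
def powerGraph (G : Type*) [Group G] : SimpleGraph G where
  Adj x y := x ≠ y ∧ ∃ n : ℕ, y = x ^ n ∨ x = y ^ n
  symm := by constructor; rintro x y ⟨h, n, hn⟩; exact ⟨h.symm, n, hn.symm⟩
  loopless := by constructor; rintro x ⟨h, _⟩; exact h rfl

/-- A set of vertices is independent if no two of its elements are adjacent. -/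
def IsIndepSet {V : Type*} (G' : SimpleGraph V) (s : Set V) : Prop :=
  s.Pairwise fun x y => ¬ G'.Adj x y

open scoped Pointwise


/-- A finite nonempty chain has a greatest element. -/
theorem chain_exists_greatest {α : Type*} [PartialOrder α] (t : Finset α)
    (ht : IsChain (· ≤ ·) (t : Set α)) (hne : t.Nonempty) : ∃ m ∈ t, ∀ x ∈ t, x ≤ m := by
  obtain ⟨m, hm, hmax⟩ := t.exists_maximal hne
  refine ⟨m, hm, fun x hx => ?_⟩
  rcases eq_or_ne x m with rfl | hxm
  · exact le_rfl
  · rcases ht hx hm hxm with h' | h'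
    · exact h'
    · exact absurd (lt_of_le_of_ne h' (Ne.symm hxm)) (fun hlt => lt_irrefl _ (lt_of_lt_of_le hlt (hmax hx hlt.le)))

/-- **Dilworth's theorem** (finite version): a finite set in a partial order all of whose
antichains have size at most `N` can be covered by `N` chains. -/
theorem dilworth_finset {α : Type*} [PartialOrder α] [DecidableEq α] :
    ∀ (N : ℕ) (s : Finset α),
      (∀ t ⊆ s, IsAntichain (· ≤ ·) (t : Set α) → t.card ≤ N) →
      ∃ C : Fin N → Finset α, (∀ v, IsChain (· ≤ ·) ((C v : Set α))) ∧ ∀ x ∈ s, ∃ v, x ∈ C v := by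
  intro N
  induction N with
  | zero =>
    intro s hs
    refine ⟨Fin.elim0, fun v => v.elim0, fun x hx => absurd (hs {x} ?_ ?_) (by simp)⟩
    · simpa using hx
    · simp only [Finset.coe_singleton]
      exact Set.subsingleton_singleton.isAntichain _
  | succ N ihN =>
    intro s
    induction s using Finset.strongInduction with
    | _ s ihs =>
      intro hs
      classical
      rcases s.eq_empty_or_nonempty with rfl | hne
      · exact ⟨fun _ => ∅, fun v => by simp [IsChain], by simp⟩
      obtain ⟨a, ha, hamax⟩ := s.exists_maximal hne
      by_cases hbig : ∃ t ⊆ s.erase a, IsAntichain (· ≤ ·) (t : Set α) ∧ t.card = N + 1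
      · -- hard case: there is an antichain of maximal size avoiding `a`
        obtain ⟨C', hC'chain, hC'cov⟩ := ihs (s.erase a) (Finset.erase_ssubset ha)
          (fun t ht hanti => hs t (ht.trans (Finset.erase_subset a s)) hanti)
        -- disjointify the chains
        set D : Fin (N + 1) → Finset α := fun v =>
          (s.erase a).filter fun x => x ∈ C' v ∧ ∀ w, w < v → x ∉ C' w with hD
        have hDsub : ∀ v, D v ⊆ s.erase a := fun v => Finset.filter_subset _ _
        have hDchain : ∀ v, IsChain (· ≤ ·) (D v : Set α) := fun v =>
          (hC'chain v).mono (fun x hx => by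
            have := (Finset.mem_filter.mp hx).2.1; simpa using this)
        have hDdisj : ∀ v w, v ≠ w → ∀ x, x ∈ D v → x ∈ D w → False := by
          have key : ∀ v w, w < v → ∀ x, x ∈ D v → x ∈ D w → False := by
            intro v w hwv x hxv hxw
            exact (Finset.mem_filter.mp hxv).2.2 w hwv (Finset.mem_filter.mp hxw).2.1
          intro v w hvw x hxv hxw
          rcases lt_or_gt_of_ne hvw with h | h
          · exact key w v h x hxw hxv
          · exact key v w h x hxv hxw
        have hDcov : ∀ x ∈ s.erase a, ∃ v, x ∈ D v := by
          intro x hx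
          obtain ⟨v₀, hv₀⟩ := hC'cov x hx
          have hne' : (Finset.univ.filter fun v => x ∈ C' v).Nonempty :=
            ⟨v₀, by simp [hv₀]⟩
          set v := (Finset.univ.filter fun v => x ∈ C' v).min' hne' with hv
          refine ⟨v, Finset.mem_filter.mpr ⟨hx, ?_, ?_⟩⟩
          · exact (Finset.mem_filter.mp ((Finset.univ.filter _).min'_mem hne')).2
          · intro w hwv hwC
            exact absurd (Finset.min'_le _ w (by simp [hwC])) (not_le.mpr hwv)
        -- each (N+1)-antichain avoiding `a` meets each `D v` in exactly one point
        have huniq : ∀ t, t ⊆ s.erase a → IsAntichain (· ≤ ·) (t : Set α) → t.card = N + 1 →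
            ∀ v, ∃ b ∈ t, b ∈ D v := by
          intro t ht hanti hcard v
          by_contra hnob
          push_neg at hnob
          -- count
          have hsub : t ⊆ (Finset.univ.erase v).biUnion fun w => t.filter (· ∈ D w) := by
            intro x hx
            obtain ⟨w, hw⟩ := hDcov x (ht hx)
            have hwv : w ≠ v := fun hwveq => hnob x hx (hwveq ▸ hw)
            exact Finset.mem_biUnion.mpr ⟨w, by simp [hwv], Finset.mem_filter.mpr ⟨hx, hw⟩⟩
          have hle1 : ∀ w, (t.filter (· ∈ D w)).card ≤ 1 := by
            intro w
            refine Finset.card_le_one.mpr fun x hx y hy => ?_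
            have hx' := Finset.mem_filter.mp hx
            have hy' := Finset.mem_filter.mp hy
            by_contra hxy
            rcases hDchain w hx'.2 hy'.2 hxy with h | h
            · exact hanti hx'.1 hy'.1 hxy h
            · exact hanti hy'.1 hx'.1 (Ne.symm hxy) h
          have hcount : t.card ≤ N := by
            calc t.card ≤ ((Finset.univ.erase v).biUnion fun w => t.filter (· ∈ D w)).card :=
                Finset.card_le_card hsub
              _ ≤ ∑ w ∈ Finset.univ.erase v, (t.filter (· ∈ D w)).card :=
                Finset.card_biUnion_le
              _ ≤ ∑ _w ∈ Finset.univ.erase v, 1 := Finset.sum_le_sum fun w _ => hle1 w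
              _ = (Finset.univ.erase v).card := by simp
              _ = N := by simp [Finset.card_erase_of_mem]
          omega
        -- the top elements of each `D v` occurring in maximal antichains
        set T : Fin (N + 1) → Finset α := fun v =>
          (D v).filter fun b => ∃ t, t ⊆ s.erase a ∧ IsAntichain (· ≤ ·) (t : Set α) ∧
            t.card = N + 1 ∧ b ∈ t with hT
        have hTne : ∀ v, (T v).Nonempty := by
          intro v
          obtain ⟨t, ht, hanti, hcard⟩ := hbig
          obtain ⟨b, hbt, hbD⟩ := huniq t ht hanti hcard v
          exact ⟨b, Finset.mem_filter.mpr ⟨hbD, t, ht, hanti, hcard, hbt⟩⟩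
        have hTchain : ∀ v, IsChain (· ≤ ·) ((T v : Set α)) := fun v =>
          (hDchain v).mono (fun x hx => by
            simp only [hT, Finset.coe_filter, Set.mem_setOf_eq] at hx
            exact hx.1)
        have hgreat := fun v => chain_exists_greatest (T v) (hTchain v) (hTne v)
        choose m hmT hmmax using hgreat
        have hmD : ∀ v, m v ∈ D v := fun v => (Finset.mem_filter.mp (hmT v)).1
        have hms : ∀ v, m v ∈ s.erase a := fun v => hDsub v (hmD v)
        -- any maximal antichain's point in `D v` sits below `m v`
        have hbelow : ∀ t, t ⊆ s.erase a → IsAntichain (· ≤ ·) (t : Set α) → t.card = N + 1 →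
            ∀ v, ∃ b ∈ t, b ∈ D v ∧ b ≤ m v := by
          intro t ht hanti hcard v
          obtain ⟨b, hbt, hbD⟩ := huniq t ht hanti hcard v
          exact ⟨b, hbt, hbD, hmmax v b (Finset.mem_filter.mpr ⟨hbD, t, ht, hanti, hcard, hbt⟩)⟩
        -- the `m v` are pairwise incomparable
        have hpair : ∀ v w, v ≠ w → ¬m v ≤ m w := by
          intro v w hvw hle
          obtain ⟨t, ht, hanti, hcard, hmw⟩ :=
            (Finset.mem_filter.mp (hmT w)).2
          obtain ⟨b, hbt, hbD, hbm⟩ := hbelow t ht hanti hcard v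
          have hbmw : b ≠ m w := by
            intro hbeq
            exact hDdisj v w hvw b hbD (hbeq ▸ hmD w)
          exact hanti hbt hmw hbmw (hbm.trans hle)
        -- `a` is comparable with some `m v`
        have hcomp : ∃ v, m v ≤ a := by
          by_contra hno
          push_neg at hno
          have hnam : ∀ v, ¬a ≤ m v := by
            intro v hle
            have : a < m v := lt_of_le_of_ne hle fun h => (Finset.mem_erase.mp (hms v)).1 h.symm
            exact lt_irrefl _ (lt_of_lt_of_le this (hamax (Finset.mem_erase.mp (hms v)).2 this.le))
          set A : Finset α := insert a (Finset.univ.image m) with hA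
          have hmne : ∀ v, m v ≠ a := fun v => (Finset.mem_erase.mp (hms v)).1
          have hminj : Function.Injective m := by
            intro v w hvm
            by_contra hvw
            exact hDdisj v w hvw (m v) (hmD v) (hvm ▸ hmD w)
          have hAcard : A.card = N + 2 := by
            rw [hA, Finset.card_insert_of_notMem, Finset.card_image_of_injective _ hminj]
            · simp
            · simp only [Finset.mem_image]
              rintro ⟨v, -, hv⟩
              exact hmne v hv
          have hAsub : A ⊆ s := by
            intro x hx
            rcases Finset.mem_insert.mp hx with rfl | hx'
            · exact ha
            · obtain ⟨v, -, rfl⟩ := Finset.mem_image.mp hx'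
              exact (Finset.mem_erase.mp (hms v)).2
          have hAanti : IsAntichain (· ≤ ·) (A : Set α) := by
            intro x hx y hy hxy hle
            simp only [hA, Finset.coe_insert, Set.mem_insert_iff, Finset.coe_image,
              Set.mem_image, Finset.mem_coe] at hx hy
            rcases hx with rfl | ⟨v, -, rfl⟩
            · rcases hy with rfl | ⟨w, -, rfl⟩
              · exact hxy rfl
              · exact hnam w hle
            · rcases hy with rfl | ⟨w, -, rfl⟩
              · exact hno v hle
              · refine hpair v w (fun h => hxy (by rw [h])) hle
          have := hs A hAsub hAanti
          omega
        obtain ⟨v, hva⟩ := hcomp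
        -- the chain through `a`
        set K : Finset α := insert a ((D v).filter (· ≤ m v)) with hK
        have hKchain : IsChain (· ≤ ·) (K : Set α) := by
          intro x hx y hy hxy
          simp only [hK, Finset.coe_insert, Set.mem_insert_iff, Finset.mem_coe,
            Finset.mem_filter] at hx hy
          rcases hx with rfl | ⟨hxD, hxm⟩
          · rcases hy with rfl | ⟨hyD, hym⟩
            · exact absurd rfl hxy
            · exact Or.inr (hym.trans hva)
          · rcases hy with rfl | ⟨hyD, hym⟩
            · exact Or.inl (hxm.trans hva)
            · exact hDchain v hxD hyD hxy
        have hKsub : K ⊆ s := by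
          intro x hx
          rcases Finset.mem_insert.mp hx with rfl | hx'
          · exact ha
          · exact Finset.mem_of_mem_erase (hDsub v (Finset.mem_filter.mp hx').1)
        -- the rest has all antichains of size at most N
        have hrem : ∀ t ⊆ s \ K, IsAntichain (· ≤ ·) (t : Set α) → t.card ≤ N := by
          intro t ht hanti
          by_contra hgt
          push_neg at hgt
          obtain ⟨t', ht't, ht'card⟩ := Finset.exists_subset_card_eq hgt
          have ht'anti : IsAntichain (· ≤ ·) (t' : Set α) := hanti.subset (by exact_mod_cast ht't)
          have ht'sub : t' ⊆ s.erase a := by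
            intro x hx
            have hxs := ht (ht't hx)
            have := Finset.mem_sdiff.mp hxs
            exact Finset.mem_erase.mpr ⟨fun hxa => this.2 (hxa ▸ Finset.mem_insert_self a _),
              this.1⟩
          obtain ⟨b, hbt, hbD, hbm⟩ := hbelow t' ht'sub ht'anti ht'card v
          have : b ∈ K := Finset.mem_insert.mpr (Or.inr (Finset.mem_filter.mpr ⟨hbD, hbm⟩))
          exact (Finset.mem_sdiff.mp (ht (ht't hbt))).2 this
        obtain ⟨C'', hch, hcov⟩ := ihN (s \ K) hrem
        refine ⟨Fin.cons K C'', fun v' => ?_, fun x hx => ?_⟩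
        · refine Fin.cases ?_ ?_ v'
          · simpa using hKchain
          · intro i; simpa using hch i
        · by_cases hxK : x ∈ K
          · exact ⟨0, by simpa using hxK⟩
          · obtain ⟨w, hw⟩ := hcov x (Finset.mem_sdiff.mpr ⟨hx, hxK⟩)
            exact ⟨w.succ, by simpa using hw⟩
      · -- easy case: all antichains avoiding `a` have size ≤ N
        have hsmall : ∀ t ⊆ s.erase a, IsAntichain (· ≤ ·) (t : Set α) → t.card ≤ N := by
          intro t ht hanti
          have h1 := hs t (ht.trans (Finset.erase_subset a s)) hanti
          rcases Nat.lt_or_ge t.card (N + 1) with h | h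
          · omega
          · exfalso
            have : t.card = N + 1 := le_antisymm h1 h
            exact hbig ⟨t, ht, hanti, this⟩
        obtain ⟨C', hch, hcov⟩ := ihN (s.erase a) hsmall
        refine ⟨Fin.cons {a} C', fun v' => ?_, fun x hx => ?_⟩
        · refine Fin.cases ?_ ?_ v'
          · simp only [Fin.cons_zero, Finset.coe_singleton]
            exact Set.pairwise_singleton a _
          · intro i; simpa using hch i
        · rcases eq_or_ne x a with rfl | hxa
          · exact ⟨0, by simp⟩
          · obtain ⟨w, hw⟩ := hcov x (Finset.mem_erase.mpr ⟨hxa, hx⟩)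
            exact ⟨w.succ, by simpa using hw⟩


/-- Compactness for colorings: if every finite set can be colored with `N` colors so that
same-colored pairs satisfy `R`, then the whole type can. -/
theorem exists_coloring_of_finite {α : Type*} (R : α → α → Prop) (N : ℕ)
    (hfin : ∀ T : Finset α, ∃ c : α → Fin N, ∀ a ∈ T, ∀ b ∈ T, c a = c b → R a b) :
    ∃ c : α → Fin N, ∀ a b, c a = c b → R a b := by
  classical
  choose cf hcf using hfin
  let U : Ultrafilter (Finset α) := Ultrafilter.of Filter.atTop
  have hU : (U : Filter (Finset α)) ≤ Filter.atTop := Ultrafilter.of_le _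
  have hex : ∀ a : α, ∃ v : Fin N, {T | cf T a = v} ∈ U := by
    intro a
    have huniv : (⋃ v ∈ (Set.univ : Set (Fin N)), {T | cf T a = v}) ∈ U := by
      have : (⋃ v ∈ (Set.univ : Set (Fin N)), {T : Finset α | cf T a = v}) = Set.univ := by
        ext T
        simp
      rw [this]
      exact Filter.univ_mem
    rw [Ultrafilter.finite_biUnion_mem_iff Set.finite_univ] at huniv
    obtain ⟨v, -, hv⟩ := huniv
    exact ⟨v, hv⟩
  choose c hc using hex
  refine ⟨c, fun a b hab => ?_⟩
  have h3 : {T : Finset α | {a, b} ⊆ T} ∈ U := hU (Filter.mem_atTop ({a, b} : Finset α))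
  have hmem := Filter.inter_mem (Filter.inter_mem (hc a) (hc b)) h3
  obtain ⟨T, ⟨⟨hTa, hTb⟩, hTm⟩⟩ := Filter.nonempty_of_mem hmem
  have haT : a ∈ T := hTm (Finset.mem_insert_self a _)
  have hbT : b ∈ T := hTm (Finset.mem_insert_of_mem (Finset.mem_singleton_self b))
  exact hcf T a haT b hbT (by rw [hTa, hTb, hab])

/-- In a group with bounded power-graph independence number, every element has finite order. -/
theorem torsion_of_bound {G : Type*} [Group G] {N : ℕ}
    (hN : ∀ s : Finset G, IsIndepSet (powerGraph G) ↑s → s.card ≤ N) (x : G) :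
    IsOfFinOrder x := by
  classical
  by_contra hx
  have hinj : Function.Injective fun n : ℕ => x ^ n := injective_pow_iff_not_isOfFinOrder.mpr hx
  obtain ⟨P, hPsub, hPcard⟩ := Nat.infinite_setOf_prime.exists_subset_card_eq (N + 1)
  set F := P.image fun p => x ^ p with hF
  have hFcard : F.card = N + 1 := by
    rw [hF, Finset.card_image_of_injective _ hinj, hPcard]
  have hind : IsIndepSet (powerGraph G) ↑F := by
    intro u hu v hv huv hadj
    simp only [hF, Finset.coe_image, Set.mem_image, Finset.mem_coe] at hu hv
    obtain ⟨p, hp, rfl⟩ := hu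
    obtain ⟨q, hq, rfl⟩ := hv
    have hpp : Nat.Prime p := hPsub hp
    have hqp : Nat.Prime q := hPsub hq
    have hpq : p ≠ q := fun hh => huv (by rw [hh])
    obtain ⟨-, n, hn | hn⟩ := hadj
    · rw [← pow_mul] at hn
      have : q = p * n := hinj hn
      exact hpq ((Nat.prime_dvd_prime_iff_eq hpp hqp).mp ⟨n, this⟩)
    · rw [← pow_mul] at hn
      have : p = q * n := hinj hn
      exact hpq ((Nat.prime_dvd_prime_iff_eq hqp hpp).mp ⟨n, this⟩).symm
  have := hN F hind
  omega

theorem locally_finite_of_finite_independence_number (G : Type*) [Group G]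
    (h : ∃ N : ℕ, ∀ s : Finset G, IsIndepSet (powerGraph G) ↑s → s.card ≤ N) :
    ∀ s : Finset G, Finite (Subgroup.closure (s : Set G)) := by
  classical
  obtain ⟨N, hN⟩ := h
  intro s
  have htor : ∀ x : G, IsOfFinOrder x := torsion_of_bound hN
  have hNpos : 0 < N := by
    have h1 : IsIndepSet (powerGraph G) ↑({1} : Finset G) := by
      simp only [Finset.coe_singleton, IsIndepSet]
      exact Set.pairwise_singleton _ _
    have := hN {1} h1
    simp at this
    omega
  set R : G → G → Prop := fun a b =>
    Subgroup.zpowers a ≤ Subgroup.zpowers b ∨ Subgroup.zpowers b ≤ Subgroup.zpowers a with hR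
  -- every finite set can be colored
  have hfin : ∀ T : Finset G, ∃ c : G → Fin N, ∀ a ∈ T, ∀ b ∈ T, c a = c b → R a b := by
    intro T
    have hwidth : ∀ t ⊆ T.image (fun g => Subgroup.zpowers g),
        IsAntichain (· ≤ ·) (t : Set (Subgroup G)) → t.card ≤ N := by
      intro t ht hanti
      have hgen : ∀ A ∈ t, ∃ g : G, Subgroup.zpowers g = A := by
        intro A hA
        obtain ⟨g, -, hg⟩ := Finset.mem_image.mp (ht hA)
        exact ⟨g, hg⟩
      choose gen hgenspec using hgen
      set t' : Finset G := t.attach.image (fun A => gen A.1 A.2) with ht'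
      have hcard : t'.card = t.card := by
        rw [ht', Finset.card_image_of_injOn, Finset.card_attach]
        intro A _ B _ hAB
        have h2 : Subgroup.zpowers ((fun A : {x // x ∈ t} => gen A.1 A.2) A)
            = Subgroup.zpowers ((fun A : {x // x ∈ t} => gen A.1 A.2) B) := by rw [hAB]
        simp only [hgenspec] at h2
        exact Subtype.ext h2
      have hind : IsIndepSet (powerGraph G) ↑t' := by
        intro u hu v hv huv hadj
        simp only [ht', Finset.coe_image, Set.mem_image, Finset.mem_coe,
          Finset.mem_attach] at hu hv
        obtain ⟨⟨A, hA⟩, -, rfl⟩ := hu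
        obtain ⟨⟨B, hB⟩, -, rfl⟩ := hv
        have hABne : A ≠ B := by
          intro heq
          subst heq
          exact huv rfl
        obtain ⟨-, n, hn | hn⟩ := hadj
        · -- gen B = (gen A) ^ n, so B ≤ A
          have hBA : B ≤ A := by
            rw [← hgenspec A hA, ← hgenspec B hB]
            refine Subgroup.zpowers_le.mpr ?_
            rw [hn]
            exact pow_mem (Subgroup.mem_zpowers _) n
          exact hanti hB hA hABne.symm hBA
        · have hAB : A ≤ B := by
            rw [← hgenspec A hA, ← hgenspec B hB]
            refine Subgroup.zpowers_le.mpr ?_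
            rw [hn]
            exact pow_mem (Subgroup.mem_zpowers _) n
          exact hanti hA hB hABne hAB
      have := hN t' hind
      omega
    obtain ⟨C, hCchain, hCcov⟩ := dilworth_finset N (T.image (fun g => Subgroup.zpowers g)) hwidth
    refine ⟨fun g => if hg : ∃ v, Subgroup.zpowers g ∈ C v then hg.choose else ⟨0, hNpos⟩,
      fun a ha b hb hab => ?_⟩
    have hac : ∃ v, Subgroup.zpowers a ∈ C v := hCcov _ (Finset.mem_image_of_mem _ ha)
    have hbc : ∃ v, Subgroup.zpowers b ∈ C v := hCcov _ (Finset.mem_image_of_mem _ hb)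
    simp only [dif_pos hac, dif_pos hbc] at hab
    have h1 : Subgroup.zpowers a ∈ C hbc.choose := hab ▸ hac.choose_spec
    have h2 : Subgroup.zpowers b ∈ C hbc.choose := hbc.choose_spec
    rcases eq_or_ne (Subgroup.zpowers a) (Subgroup.zpowers b) with he | hne
    · exact Or.inl (le_of_eq he)
    · exact hCchain _ h1 h2 hne
  obtain ⟨c, hc⟩ := exists_coloring_of_finite R N hfin
  -- the chain-union subgroups
  set L : Fin N → Subgroup G := fun v =>
    { carrier := {g | g = 1 ∨ ∃ y, c y = v ∧ g ∈ Subgroup.zpowers y}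
      one_mem' := Or.inl rfl
      inv_mem' := by
        intro g hg
        rcases hg with rfl | ⟨y, hy, hg⟩
        · exact Or.inl inv_one
        · exact Or.inr ⟨y, hy, inv_mem hg⟩
      mul_mem' := by
        intro g g' hg hg'
        rcases hg with rfl | ⟨y, hy, hg⟩
        · rw [one_mul]; exact hg'
        rcases hg' with rfl | ⟨z, hz, hg'⟩
        · rw [mul_one]; exact Or.inr ⟨y, hy, hg⟩
        rcases hc y z (hy.trans hz.symm) with hle | hle
        · exact Or.inr ⟨z, hz, mul_mem (hle hg) hg'⟩
        · exact Or.inr ⟨y, hy, mul_mem hg (hle hg')⟩ } with hL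
  have hmemL : ∀ g : G, g ∈ L (c g) := fun g => Or.inr ⟨g, rfl, Subgroup.mem_zpowers g⟩
  set H := Subgroup.closure ((s : Set G)) with hH
  haveI : Group.FG ↥H := Group.closure_finset_fg s
  -- cover H by the subgroups (L v).subgroupOf H
  have hcover : ⋃ v ∈ (Finset.univ : Finset (Fin N)),
      ((1 : ↥H) • (((L v).subgroupOf H : Subgroup ↥H) : Set ↥H)) = Set.univ := by
    refine Set.eq_univ_of_forall fun x => ?_
    refine Set.mem_biUnion (Finset.mem_univ (c ↑x)) ?_
    rw [one_smul]
    exact Subgroup.mem_subgroupOf.mpr (hmemL ↑x)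
  obtain ⟨v, -, hvfin⟩ := Subgroup.exists_finiteIndex_of_leftCoset_cover hcover
  haveI := hvfin
  set K : Subgroup ↥H := (L v).subgroupOf H with hK
  haveI : Group.FG ↥K := Subgroup.fg_of_index_ne_zero _
  -- any finite subset of L v lies in a common cyclic subgroup
  have hcommon : ∀ F : Finset G, (↑F : Set G) ⊆ (L v : Set G) →
      ∃ z : G, ∀ g ∈ F, g ∈ Subgroup.zpowers z := by
    have main : ∀ F : Finset G, (↑F : Set G) ⊆ (L v : Set G) →
        ∃ z : G, (z = 1 ∨ c z = v) ∧ ∀ g ∈ F, g ∈ Subgroup.zpowers z := by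
      intro F
      induction F using Finset.induction with
      | empty => exact fun _ => ⟨1, Or.inl rfl, by simp⟩
      | @insert g F hgF ih =>
        intro hsub
        obtain ⟨z, hzv, hz⟩ := ih fun x hx => hsub (by simp [hx])
        have hgL : g ∈ L v := hsub (by simp)
        have hgL2 : g = 1 ∨ ∃ y, c y = v ∧ g ∈ Subgroup.zpowers y := hgL
        rcases hgL2 with rfl | ⟨y, hy, hgy⟩
        · refine ⟨z, hzv, fun g' hg' => ?_⟩
          rcases Finset.mem_insert.mp hg' with rfl | hg''
          · exact one_mem _
          · exact hz g' hg''
        rcases hzv with rfl | hzc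
        · refine ⟨y, Or.inr hy, fun g' hg' => ?_⟩
          rcases Finset.mem_insert.mp hg' with rfl | hg''
          · exact hgy
          · have h1 := hz g' hg''
            rw [Subgroup.zpowers_one_eq_bot] at h1
            rw [Subgroup.mem_bot.mp h1]
            exact one_mem _
        · rcases hc y z (hy.trans hzc.symm) with hle | hle
          · refine ⟨z, Or.inr hzc, fun g' hg' => ?_⟩
            rcases Finset.mem_insert.mp hg' with rfl | hg''
            · exact hle hgy
            · exact hz g' hg''
          · refine ⟨y, Or.inr hy, fun g' hg' => ?_⟩
            rcases Finset.mem_insert.mp hg' with rfl | hg''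
            · exact hgy
            · exact hle (hz g' hg'')
    exact fun F hF => (main F hF).imp fun z hz => hz.2
  -- K is finitely generated, hence contained in a single finite cyclic subgroup
  obtain ⟨TK, hTK⟩ := (inferInstance : Group.FG ↥K).out
  set φ : ↥K →* G := H.subtype.comp K.subtype with hφ
  have hφinj : Function.Injective φ := fun a b hab => by
    apply Subtype.ext
    apply Subtype.ext
    exact hab
  have himg : ((⊤ : Subgroup ↥K).map φ) = Subgroup.closure (φ '' ↑TK) := by
    rw [← hTK, MonoidHom.map_closure]
  have hgens : (φ '' (↑TK : Set ↥K) : Set G) ⊆ (L v : Set G) := by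
    rintro _ ⟨k, -, rfl⟩
    exact Subgroup.mem_subgroupOf.mp k.2
  obtain ⟨z, hz⟩ := hcommon (TK.image φ) (by rw [Finset.coe_image]; exact hgens)
  have hle : ((⊤ : Subgroup ↥K).map φ) ≤ Subgroup.zpowers z := by
    rw [himg, ← Finset.coe_image]
    exact (Subgroup.closure_le _).mpr fun g hg => hz g (Finset.mem_coe.mp hg)
  have hzfin : (Subgroup.zpowers z : Set G).Finite := (htor z).finite_zpowers
  have hfinmap : Finite ↥((⊤ : Subgroup ↥K).map φ) :=
    (hzfin.subset (SetLike.coe_subset_coe.mpr hle)).to_subtype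
  have hfintop : Finite ↥(⊤ : Subgroup ↥K) :=
    Finite.of_equiv _ (Subgroup.equivMapOfInjective (⊤ : Subgroup ↥K) φ hφinj).toEquiv.symm
  have hKfin : Finite ↥K := Finite.of_equiv _ Subgroup.topEquiv.toEquiv
  exact Finite.of_equiv _ (Subgroup.groupEquivQuotientProdSubgroup (s := K)).symm
end

section
/- If the clique number of the power graph of a group G is finite, then G has bounded exponent, i.e., there exists n ≥ 1 with g^n = e for all g in G. -/
lemma chain_le {G : Type*} [Group G] {N : ℕ}
    (hN : ∀ s : Finset G, (powerGraph G).IsClique ↑s → s.card ≤ N)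
    (t : ℕ) (f : ℕ → G) (hinj : Set.InjOn f (Set.Iio t))
    (hpow : ∀ i j, i < j → j < t → ∃ n : ℕ, f j = (f i) ^ n ∨ f i = (f j) ^ n) :
    t ≤ N := by
  classical
  have hc : (powerGraph G).IsClique ↑((Finset.range t).image f) := by
    intro x hx y hy hxy
    simp only [Finset.coe_image, Set.mem_image, Finset.coe_range, Set.mem_Iio] at hx hy
    obtain ⟨i, hi, rfl⟩ := hx
    obtain ⟨j, hj, rfl⟩ := hy
    refine ⟨hxy, ?_⟩
    rcases lt_trichotomy i j with hij | hij | hij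
    · obtain ⟨n, hn⟩ := hpow i j hij hj; exact ⟨n, hn⟩
    · exact absurd (by rw [hij]) hxy
    · obtain ⟨n, hn⟩ := hpow j i hij hi; exact ⟨n, hn.symm⟩
  have := hN _ hc
  rwa [Finset.card_image_of_injOn (by simpa using hinj), Finset.card_range] at this

lemma finOrder_of_bound {G : Type*} [Group G] {N : ℕ}
    (hN : ∀ s : Finset G, (powerGraph G).IsClique ↑s → s.card ≤ N) (g : G) :
    IsOfFinOrder g := by
  by_contra hg
  have hinj : Function.Injective (fun n : ℕ => g ^ n) :=
    injective_pow_iff_not_isOfFinOrder.mpr hg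
  have key := chain_le hN (N + 1) (fun k => g ^ (2 ^ k))
    (fun i _ j _ hij => by
      have h2 : (2:ℕ) ^ i = 2 ^ j := hinj hij
      exact Nat.pow_right_injective (le_refl 2) h2)
    (fun i j hij _ => ⟨2 ^ (j - i), Or.inl (by
      rw [← pow_mul, ← pow_add, Nat.add_sub_cancel' hij.le])⟩)
  omega

lemma prime_le_of_bound {G : Type*} [Group G] {N : ℕ}
    (hN : ∀ s : Finset G, (powerGraph G).IsClique ↑s → s.card ≤ N) (g : G)
    {p : ℕ} (hp : p.Prime) (hdvd : p ∣ orderOf g) : p ≤ N := by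
  have hm : orderOf g ≠ 0 := (finOrder_of_bound hN g).orderOf_pos.ne'
  set h : G := g ^ (orderOf g / p) with hh
  have hordh : orderOf h = p := orderOf_pow_orderOf_div hm hdvd
  refine chain_le hN p (fun k => h ^ k) ?_ ?_
  · intro i hi j hj hfij
    have := pow_inj_mod.mp hfij
    rw [hordh] at this
    rwa [Nat.mod_eq_of_lt hi, Nat.mod_eq_of_lt hj] at this
  · intro i j hij hj
    rcases Nat.eq_zero_or_pos i with rfl | hi
    · exact ⟨0, Or.inr (by simp)⟩
    · have hcop : Nat.Coprime i p := (Nat.coprime_of_lt_prime hi.ne' (hij.trans hj) hp).symm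
      obtain ⟨m, -, hm1⟩ := Nat.exists_mul_mod_eq_one_of_coprime hcop hp.one_lt
      refine ⟨m * j, Or.inl ?_⟩
      rw [← pow_mul h]
      rw [pow_eq_pow_iff_modEq, hordh]
      have h1 : i * m ≡ 1 [MOD p] := by
        unfold Nat.ModEq
        rw [hm1, Nat.mod_eq_of_lt hp.one_lt]
      have hmod : i * (m * j) ≡ j [MOD p] := by
        calc i * (m * j) = i * m * j := by ring
          _ ≡ 1 * j [MOD p] := h1.mul_right j
          _ = j := one_mul j
      exact hmod.symm

lemma factorization_le_of_bound {G : Type*} [Group G] {N : ℕ}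
    (hN : ∀ s : Finset G, (powerGraph G).IsClique ↑s → s.card ≤ N) (g : G)
    {p : ℕ} (hp : p.Prime) : (orderOf g).factorization p + 1 ≤ N := by
  have hm : orderOf g ≠ 0 := (finOrder_of_bound hN g).orderOf_pos.ne'
  set a : ℕ := (orderOf g).factorization p with ha
  have hpa : p ^ a ∣ orderOf g := Nat.ordProj_dvd _ _
  set h : G := g ^ (orderOf g / p ^ a) with hh
  have hordh : orderOf h = p ^ a := orderOf_pow_orderOf_div hm hpa
  have hord : ∀ k, k ≤ a → orderOf (h ^ p ^ k) = p ^ (a - k) := by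
    intro k hk
    rw [orderOf_pow_of_dvd (pow_ne_zero k hp.pos.ne') (by rw [hordh]; exact pow_dvd_pow p hk),
      hordh, Nat.pow_div hk hp.pos]
  refine chain_le hN (a + 1) (fun k => h ^ p ^ k) ?_ ?_
  · intro i hi j hj hfij
    have hfij' : h ^ p ^ i = h ^ p ^ j := hfij
    have : p ^ (a - i) = p ^ (a - j) := by
      rw [← hord i (by simpa using Nat.lt_succ_iff.mp hi),
        ← hord j (by simpa using Nat.lt_succ_iff.mp hj), hfij']
    have := Nat.pow_right_injective hp.two_le this
    simp only [Set.mem_Iio] at hi hj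
    omega
  · intro i j hij _
    exact ⟨p ^ (j - i), Or.inl (by
      rw [← pow_mul h, ← pow_add, Nat.add_sub_cancel' hij.le])⟩

theorem bounded_exponent_of_finite_clique_number (G : Type*) [Group G]
    (h : ∃ N : ℕ, ∀ s : Finset G, (powerGraph G).IsClique ↑s → s.card ≤ N) :
    ∃ n : ℕ, 1 ≤ n ∧ ∀ g : G, g ^ n = 1 := by
  obtain ⟨N, hN⟩ := h
  refine ⟨N.factorial ^ N, Nat.one_le_iff_ne_zero.mpr (pow_ne_zero _ N.factorial_pos.ne'), ?_⟩
  intro g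
  rw [← orderOf_dvd_iff_pow_eq_one]
  have hm : orderOf g ≠ 0 := (finOrder_of_bound hN g).orderOf_pos.ne'
  rw [← Nat.factorization_le_iff_dvd hm (pow_ne_zero _ N.factorial_pos.ne')]
  intro p
  rcases Nat.eq_zero_or_pos ((orderOf g).factorization p) with h0 | hpos
  · simp [h0]
  · have hp : p.Prime := Nat.prime_of_mem_primeFactors
      ((Nat.support_factorization _) ▸ Finsupp.mem_support_iff.mpr hpos.ne')
    have hpdvd : p ∣ orderOf g := Nat.dvd_of_factorization_pos hpos.ne'
    have hpN : p ≤ N := prime_le_of_bound hN g hp hpdvd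
    have haN : (orderOf g).factorization p ≤ N := by
      have := factorization_le_of_bound hN g hp; omega
    have hfact : 1 ≤ (N.factorial).factorization p :=
      hp.factorization_pos_of_dvd N.factorial_pos.ne' (Nat.dvd_factorial hp.pos hpN)
    rw [Nat.factorization_pow]
    calc (orderOf g).factorization p ≤ N := haN
      _ ≤ N * (N.factorial).factorization p := Nat.le_mul_of_pos_right _ hfact
      _ = (N • (N.factorial).factorization) p := by simp [mul_comm]
end

section
/- Every periodic group has power graph with at most countable chromatic number. -/
theorem periodic_group_countable_chromatic (G : Type*) [Group G]
    (hG : ∀ g : G, IsOfFinOrder g) :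
    ∃ c : G → ℕ, ∀ x y : G, (powerGraph G).Adj x y → c x ≠ c y := by
  classical
  -- For each subgroup H, the set of its generators
  set S : Subgroup G → Set G := fun H => {h : G | Subgroup.zpowers h = H} with hS
  have hScount : ∀ H : Subgroup G, (S H).Countable := by
    intro H
    rcases Set.eq_empty_or_nonempty (S H) with h | ⟨h, hh⟩
    · simp [h]
    · have hfin : (Subgroup.zpowers h : Set G).Finite := finite_zpowers.2 (hG h)
      refine ((hfin.subset ?_).countable)
      intro g hg
      have : g ∈ Subgroup.zpowers g := Subgroup.mem_zpowers g
      rw [hg, ← hh] at this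
      exact this
  -- choose injections from each generator set into ℕ
  have hinj : ∀ H : Subgroup G, ∃ f : G → ℕ, Set.InjOn f (S H) := by
    intro H
    exact Set.countable_iff_exists_injOn.1 (hScount H)
  choose ι hι using hinj
  refine ⟨fun g => Nat.pair (orderOf g) (ι (Subgroup.zpowers g) g), ?_⟩
  rintro x y ⟨hxy, n, hn⟩ hc
  have h1 : orderOf x = orderOf y ∧
      ι (Subgroup.zpowers x) x = ι (Subgroup.zpowers y) y := by
    constructor
    · have := congrArg Nat.unpair hc; simpa [Nat.unpair_pair] using congrArg Prod.fst this
    · have := congrArg Nat.unpair hc; simpa [Nat.unpair_pair] using congrArg Prod.snd this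
  have hzeq : Subgroup.zpowers x = Subgroup.zpowers y := by
    have hcard : Nat.card (Subgroup.zpowers x) = Nat.card (Subgroup.zpowers y) := by
      rw [Nat.card_zpowers, Nat.card_zpowers, h1.1]
    rcases hn with rfl | rfl
    · have hle : Subgroup.zpowers (x ^ n) ≤ Subgroup.zpowers x :=
        Subgroup.zpowers_le.2 ⟨n, by simp⟩
      have : Finite (Subgroup.zpowers x) := (finite_zpowers.2 (hG x)).to_subtype
      exact (Subgroup.eq_of_le_of_card_ge hle hcard.le).symm
    · have hle : Subgroup.zpowers (y ^ n) ≤ Subgroup.zpowers y :=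
        Subgroup.zpowers_le.2 ⟨n, by simp⟩
      have : Finite (Subgroup.zpowers y) := (finite_zpowers.2 (hG y)).to_subtype
      exact Subgroup.eq_of_le_of_card_ge hle hcard.ge
  have hx : x ∈ S (Subgroup.zpowers x) := rfl
  have hy : y ∈ S (Subgroup.zpowers x) := hzeq.symm
  have h2 : ι (Subgroup.zpowers x) x = ι (Subgroup.zpowers x) y := by
    rw [h1.2, hzeq]
  exact hxy (hι (Subgroup.zpowers x) hx hy h2)
end

section
/- If G is a group of finite exponent n, then the power graph of G is a perfect graph. -/
/-- A graph is perfect if every finite induced subgraph has chromatic number equal to its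
clique number. -/
def SimpleGraph.IsPerfect {V : Type*} (G' : SimpleGraph V) : Prop :=
  ∀ s : Finset V,
    (SimpleGraph.induce (↑s : Set V) G').chromaticNumber =
      ((SimpleGraph.induce (↑s : Set V) G').cliqueNum : ℕ∞)

theorem powerGraph_perfect_of_bounded_exponent (G : Type*) [Group G] (n : ℕ)
    (hn : 0 < n) (hexp : Monoid.exponent G = n) :
    (powerGraph G).IsPerfect := by
  classical
  -- every element has finite order
  have hfin : ∀ x : G, IsOfFinOrder x := by
    intro x
    refine isOfFinOrder_iff_pow_eq_one.mpr ⟨n, hn, ?_⟩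
    rw [← hexp]; exact Monoid.pow_exponent_eq_one x
  -- key: existence of a natural power iff containment of cyclic subgroups
  have powkey : ∀ x y : G, (∃ m : ℕ, y = x ^ m) ↔ Subgroup.zpowers y ≤ Subgroup.zpowers x := by
    intro x y
    constructor
    · rintro ⟨m, rfl⟩
      exact Subgroup.zpowers_le.mpr ⟨(m : ℤ), by simp⟩
    · intro h
      have hy : y ∈ Subgroup.zpowers x := h (Subgroup.mem_zpowers y)
      obtain ⟨m, hm⟩ := (hfin x).mem_powers_iff_mem_zpowers.mpr hy
      exact ⟨m, hm.symm⟩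
  intro s
  set V := ↥(↑s : Set G)
  set H := SimpleGraph.induce (↑s : Set G) (powerGraph G) with hH
  -- a linear order on V through an equiv with Fin
  let e : V ≃ Fin (Fintype.card V) := Fintype.equivFin V
  -- lexicographic partial order on V
  let f : V → (Subgroup G ×ₗ Fin (Fintype.card V)) :=
    fun v => toLex (Subgroup.zpowers (v : G), e v)
  have hfinj : Function.Injective f := by
    intro a b hab
    have : e a = e b := congrArg (fun p => (ofLex p).2) hab
    exact e.injective this
  letI : PartialOrder V := PartialOrder.lift f hfinj
  have hlt : ∀ a b : V, a < b ↔ f a < f b := fun a b => Iff.rfl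
  have hlt' : ∀ a b : V, a < b ↔
      (Subgroup.zpowers (a : G) < Subgroup.zpowers (b : G) ∨
        (Subgroup.zpowers (a : G) = Subgroup.zpowers (b : G) ∧ e a < e b)) := by
    intro a b
    rw [hlt]
    exact Prod.Lex.lt_iff
  -- comparable implies adjacent
  have lt_adj : ∀ a b : V, a < b → H.Adj a b := by
    intro a b hab
    have hne : a ≠ b := ne_of_lt hab
    have hle : Subgroup.zpowers (a : G) ≤ Subgroup.zpowers (b : G) := by
      rcases (hlt' a b).mp hab with h | h
      · exact h.le
      · exact h.1.le
    obtain ⟨m, hm⟩ := (powkey (b : G) (a : G)).mpr hle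
    refine ⟨?_, m, Or.inr hm⟩
    exact fun h => hne (Subtype.ext h)
  -- adjacent implies comparable
  have adj_lt : ∀ a b : V, H.Adj a b → a < b ∨ b < a := by
    intro a b hab
    obtain ⟨hne, m, hm⟩ := hab
    have hne' : a ≠ b := fun h => hne (congrArg _ h)
    have hle : Subgroup.zpowers (a : G) ≤ Subgroup.zpowers (b : G) ∨
        Subgroup.zpowers (b : G) ≤ Subgroup.zpowers (a : G) := by
      rcases hm with h | h
      · exact Or.inr ((powkey _ _).mp ⟨m, h⟩)
      · exact Or.inl ((powkey _ _).mp ⟨m, h⟩)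
    rcases hle with h | h
    · rcases lt_or_eq_of_le h with h' | h'
      · exact Or.inl ((hlt' a b).mpr (Or.inl h'))
      · rcases lt_or_gt_of_ne (fun h'' : e a = e b => hne' (e.injective h'')) with h'' | h''
        · exact Or.inl ((hlt' a b).mpr (Or.inr ⟨h', h''⟩))
        · exact Or.inr ((hlt' b a).mpr (Or.inr ⟨h'.symm, h''⟩))
    · rcases lt_or_eq_of_le h with h' | h'
      · exact Or.inr ((hlt' b a).mpr (Or.inl h'))
      · rcases lt_or_gt_of_ne (fun h'' : e a = e b => hne' (e.injective h'')) with h'' | h''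
        · exact Or.inl ((hlt' a b).mpr (Or.inr ⟨h'.symm, h''⟩))
        · exact Or.inr ((hlt' b a).mpr (Or.inr ⟨h', h''⟩))
  -- heights are finite
  have htop : ∀ v : V, Order.height v ≠ ⊤ := by
    intro v
    have : Order.height v ≤ (Fintype.card V : ℕ∞) := by
      apply Order.height_le
      intro p _
      have : p.length + 1 ≤ Fintype.card V := by
        simpa using Fintype.card_le_of_injective p.toFun p.strictMono.injective
      exact_mod_cast Nat.le_of_succ_le this
    exact fun h => by simp [h] at this
  -- chains give cliques: height is bounded by cliqueNum
  have hc : ∀ v : V, (Order.height v).toNat < H.cliqueNum := by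
    intro v
    have hv : Order.height v = ((Order.height v).toNat : ℕ∞) :=
      (ENat.coe_toNat (htop v)).symm
    obtain ⟨p, hlast, hlen⟩ := Order.exists_series_of_height_eq_coe v hv
    set T : Finset V := Finset.image (fun i => p i) Finset.univ with hT
    have hclique : H.IsClique (T : Set V) := by
      intro x hx y hy hxy
      simp only [hT, Finset.coe_image, Set.mem_image] at hx hy
      obtain ⟨i, _, rfl⟩ := hx
      obtain ⟨j, _, rfl⟩ := hy
      have hij : i ≠ j := fun h => hxy (by rw [h])
      rcases hij.lt_or_gt with h | h
      · exact lt_adj _ _ (p.strictMono h)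
      · exact (lt_adj _ _ (p.strictMono h)).symm
    have hcard : T.card = p.length + 1 := by
      rw [hT, Finset.card_image_of_injective _ p.strictMono.injective,
        Finset.card_univ, Fintype.card_fin]
    have := SimpleGraph.IsClique.card_le_cliqueNum (G := H) (tc := hclique)
    omega
  -- the coloring by height
  have hcol : H.Colorable H.cliqueNum := by
    refine ⟨SimpleGraph.Coloring.mk (fun v => (⟨(Order.height v).toNat, hc v⟩ : Fin H.cliqueNum)) ?_⟩
    intro a b hab hcontra
    have heq : (Order.height a).toNat = (Order.height b).toNat := by
      simpa using congrArg Fin.val hcontra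
    have heq' : Order.height a = Order.height b := by
      rw [← ENat.coe_toNat (htop a), ← ENat.coe_toNat (htop b)]
      exact_mod_cast heq
    rcases adj_lt a b hab with h | h
    · exact absurd heq' (Order.height_strictMono h ((htop a).lt_top)).ne
    · exact absurd heq'.symm (Order.height_strictMono h ((htop b).lt_top)).ne
  -- conclude
  obtain ⟨T, hT⟩ := SimpleGraph.exists_isNClique_cliqueNum (G := H)
  have hge : (H.cliqueNum : ℕ∞) ≤ H.chromaticNumber := by
    have := hT.isClique.card_le_chromaticNumber
    rwa [hT.card_eq] at this
  exact le_antisymm hcol.chromaticNumber_le hge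
end
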